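/- For every nondegenerate interval I ⊆ ℝ there exists a max-family (z_n : I → (0, +∞))_{n=1}^∞ such that the Hausdorff dimension of I_z := {x ∈ I : lim_{n→∞} z_n(x) = +∞} is zero. -/

import Mathlib

open Set Filter Topology MeasureTheory

/-- `limSet I f` is the set `I_f = {x ∈ I : lim_{n→∞} f_n(x) = +∞}`. -/
def limSet (I : Set ℝ) (f : ℕ → ℝ → ℝ) : Set ℝ :=
  {x ∈ I | Tendsto (fun n => f n x) atTop atTop}

/-- A max-family on `I`: a nondecreasing sequence of continuous functions whose integrals
over every nondegenerate subinterval of `I` tend to `+∞`. -/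
def IsMaxFamily (I : Set ℝ) (f : ℕ → ℝ → ℝ) : Prop :=
  (∀ n, ContinuousOn (f n) I) ∧
  (∀ n, ∀ x ∈ I, f n x ≤ f (n + 1) x) ∧
  (∀ x ∈ I, ∀ y ∈ I, x < y →
    Tendsto (fun n => ∫ t in x..y, f n t) atTop atTop)

open scoped NNReal ENNReal

noncomputable def qq : ℕ → ℝ := fun k => (((Denumerable.eqv ℚ).symm k : ℚ) : ℝ)

lemma qq_dense {x y : ℝ} (h : x < y) : ∃ k, x < qq k ∧ qq k < y := by
  obtain ⟨ρ, h1, h2⟩ := exists_rat_btwn h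
  refine ⟨Denumerable.eqv ℚ ρ, ?_⟩
  have : qq (Denumerable.eqv ℚ ρ) = (ρ : ℝ) := by
    unfold qq; rw [Equiv.symm_apply_apply]
  rw [this]; exact ⟨h1, h2⟩

noncomputable def Rk (k : ℕ) : ℝ := 2 ^ (k ^ 2)
noncomputable def rk (k : ℕ) : ℝ := ((2:ℝ) ^ (k ^ 2))⁻¹

lemma Rk_pos (k : ℕ) : 0 < Rk k := by unfold Rk; positivity
lemma rk_pos (k : ℕ) : 0 < rk k := by unfold rk; positivity
lemma rk_inv (k : ℕ) : (rk k)⁻¹ = Rk k := by simp [rk, Rk]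
lemma rk_le (k : ℕ) : rk k ≤ (1/2 : ℝ) ^ k := by
  rw [rk, one_div, ← inv_pow]
  apply pow_le_pow_of_le_one (by positivity) (by norm_num)
  nlinarith [sq_nonneg (k-1)]

noncomputable def core (n : ℕ) (t : ℝ) : ℝ := ((n:ℝ)+1) / (1 + ((n:ℝ)+1) * t)

noncomputable def g (k n : ℕ) (x : ℝ) : ℝ := max 0 (core n |x - qq k| - Rk k)

noncomputable def zf (n : ℕ) (x : ℝ) : ℝ := 1 + ∑ k ∈ Finset.range (n+1), g k n x

lemma core_denom_pos (n : ℕ) {t : ℝ} (ht : 0 ≤ t) : 0 < 1 + ((n:ℝ)+1) * t := by positivity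

lemma core_nonneg (n : ℕ) {t : ℝ} (ht : 0 ≤ t) : 0 ≤ core n t :=
  div_nonneg (by positivity) (core_denom_pos n ht).le

lemma core_mono (n : ℕ) {t : ℝ} (ht : 0 ≤ t) : core n t ≤ core (n+1) t := by
  unfold core
  have h1 := core_denom_pos n ht
  have h2 : (0:ℝ) < 1 + ((n:ℝ) + 1 + 1) * t := by positivity
  rw [div_le_div_iff₀ h1 (by push_cast; exact h2)]
  push_cast; nlinarith

lemma core_le_inv (n : ℕ) {t : ℝ} (ht : 0 < t) : core n t ≤ t⁻¹ := by
  unfold core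
  rw [div_le_iff₀ (core_denom_pos n ht.le), inv_mul_eq_div, le_div_iff₀ ht]
  nlinarith

lemma g_nonneg (k n : ℕ) (x : ℝ) : 0 ≤ g k n x := le_max_left _ _

lemma g_mono (k n : ℕ) (x : ℝ) : g k n x ≤ g k (n+1) x :=
  max_le_max le_rfl (by gcongr; exact core_mono n (abs_nonneg _))

lemma g_cont (k n : ℕ) : Continuous (g k n) := by
  apply continuous_const.max
  apply Continuous.sub _ continuous_const
  apply continuous_const.div
  · fun_prop
  · intro x
    have := core_denom_pos n (abs_nonneg (x - qq k))
    linarith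

lemma g_le_inv (k n : ℕ) {x : ℝ} (hx : x ≠ qq k) : g k n x ≤ |x - qq k|⁻¹ := by
  have ht : 0 < |x - qq k| := abs_pos.2 (sub_ne_zero.2 hx)
  have h1 := core_le_inv n ht
  have h2 := (Rk_pos k).le
  have : (0:ℝ) ≤ |x - qq k|⁻¹ := by positivity
  simp only [g, max_le_iff]
  constructor <;> linarith

lemma g_zero (k n : ℕ) {x : ℝ} (hx : rk k ≤ |x - qq k|) : g k n x = 0 := by
  have ht : 0 < |x - qq k| := lt_of_lt_of_le (rk_pos k) hx
  have h1 := core_le_inv n ht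
  have h2 : |x - qq k|⁻¹ ≤ Rk k := by
    rw [← rk_inv]; exact inv_anti₀ (rk_pos k) hx
  simp only [g, max_eq_left_iff]
  linarith

lemma zf_cont (n : ℕ) : Continuous (zf n) :=
  continuous_const.add (continuous_finset_sum _ fun k _ => g_cont k n)

lemma zf_pos (n : ℕ) (x : ℝ) : 0 < zf n x := by
  have : 0 ≤ ∑ k ∈ Finset.range (n+1), g k n x :=
    Finset.sum_nonneg fun k _ => g_nonneg k n x
  unfold zf; linarith

lemma zf_mono (n : ℕ) (x : ℝ) : zf n x ≤ zf (n+1) x := by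
  unfold zf
  have h1 : ∑ k ∈ Finset.range (n+1), g k n x ≤ ∑ k ∈ Finset.range (n+1), g k (n+1) x :=
    Finset.sum_le_sum fun k _ => g_mono k n x
  have h2 : ∑ k ∈ Finset.range (n+1), g k (n+1) x ≤ ∑ k ∈ Finset.range (n+2), g k (n+1) x := by
    apply Finset.sum_le_sum_of_subset_of_nonneg
    · exact Finset.range_subset_range.2 (by omega)
    · exact fun k _ _ => g_nonneg k (n+1) x
  linarith

lemma g_le_zf {k n : ℕ} (hkn : k ≤ n) (x : ℝ) : g k n x ≤ zf n x := by
  have h1 : g k n x ≤ ∑ j ∈ Finset.range (n+1), g j n x :=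
    Finset.single_le_sum (fun j _ => g_nonneg j n x) (Finset.mem_range.2 (by omega))
  unfold zf; linarith

lemma core_integral {c y : ℝ} (hcy : c ≤ y) (n : ℕ) :
    ∫ t in c..y, core n (t - c) = Real.log (1 + ((n:ℝ)+1) * (y - c)) := by
  have hicc : Set.uIcc c y = Set.Icc c y := Set.uIcc_of_le hcy
  have hpos : ∀ t ∈ Set.uIcc c y, 0 < 1 + ((n:ℝ)+1) * (t - c) := by
    intro t ht
    rw [hicc] at ht
    have : 0 ≤ t - c := sub_nonneg.2 ht.1
    positivity
  have hderiv : ∀ t ∈ Set.uIcc c y,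
      HasDerivAt (fun s => Real.log (1 + ((n:ℝ)+1) * (s - c))) (core n (t - c)) t := by
    intro t ht
    have hu : HasDerivAt (fun s : ℝ => 1 + ((n:ℝ)+1) * (s - c)) ((n:ℝ)+1) t := by
      simpa using (((hasDerivAt_id t).sub_const c).const_mul ((n:ℝ)+1)).const_add 1
    have := hu.log (ne_of_gt (hpos t ht))
    simpa [core] using this
  have hint : IntervalIntegrable (fun t => core n (t - c)) volume c y := by
    apply ContinuousOn.intervalIntegrable
    apply ContinuousOn.div continuousOn_const
    · fun_prop
    · exact fun t ht => ne_of_gt (hpos t ht)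
  have := intervalIntegral.integral_eq_sub_of_hasDerivAt hderiv hint
  rw [this]
  simp

lemma key_integral {x y c : ℝ} (hc : x < c) (hcy : c < y) {k n : ℕ}
    (hq : qq k = c) (hkn : k ≤ n) :
    Real.log (1 + ((n:ℝ)+1) * (y - c)) - Rk k * (y - c) ≤ ∫ t in x..y, zf n t := by
  have hxy : x ≤ y := le_trans hc.le hcy.le
  have hint_z : IntervalIntegrable (zf n) volume x y :=
    (zf_cont n).intervalIntegrable x y
  have hint_g : ∀ a b : ℝ, IntervalIntegrable (g k n) volume a b :=
    fun a b => (g_cont k n).intervalIntegrable a b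
  -- ψ integrable on [c, y]
  have hpos : ∀ t ∈ Set.uIcc c y, 0 < 1 + ((n:ℝ)+1) * (t - c) := by
    intro t ht
    rw [Set.uIcc_of_le hcy.le] at ht
    have : 0 ≤ t - c := sub_nonneg.2 ht.1
    positivity
  have hint_core : IntervalIntegrable (fun t => core n (t - c)) volume c y := by
    apply ContinuousOn.intervalIntegrable
    apply ContinuousOn.div continuousOn_const
    · fun_prop
    · exact fun t ht => ne_of_gt (hpos t ht)
  have hint_psi : IntervalIntegrable (fun t => core n (t - c) - Rk k) volume c y :=
    hint_core.sub (intervalIntegrable_const)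
  -- step 1 : ∫ g ≤ ∫ zf
  have h1 : ∫ t in x..y, g k n t ≤ ∫ t in x..y, zf n t :=
    intervalIntegral.integral_mono_on hxy (hint_g x y) hint_z (fun t _ => g_le_zf hkn t)
  -- step 2 : split
  have h2 : ∫ t in x..y, g k n t = (∫ t in x..c, g k n t) + ∫ t in c..y, g k n t :=
    (intervalIntegral.integral_add_adjacent_intervals (hint_g x c) (hint_g c y)).symm
  have h3 : 0 ≤ ∫ t in x..c, g k n t :=
    intervalIntegral.integral_nonneg hc.le (fun t _ => g_nonneg k n t)
  -- step 4 : ψ ≤ g on [c, y]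
  have h4 : ∫ t in c..y, (core n (t - c) - Rk k) ≤ ∫ t in c..y, g k n t := by
    apply intervalIntegral.integral_mono_on hcy.le hint_psi (hint_g c y)
    intro t ht
    have habs : |t - qq k| = t - c := by
      rw [hq, abs_of_nonneg (sub_nonneg.2 ht.1)]
    calc core n (t - c) - Rk k = core n |t - qq k| - Rk k := by rw [habs]
    _ ≤ g k n t := le_max_right _ _
  -- step 5 : compute ∫ ψ
  have h5 : ∫ t in c..y, (core n (t - c) - Rk k)
      = Real.log (1 + ((n:ℝ)+1) * (y - c)) - Rk k * (y - c) := by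
    rw [intervalIntegral.integral_sub hint_core intervalIntegrable_const,
      core_integral hcy.le, intervalIntegral.integral_const]
    ring_nf
  linarith

lemma integral_tendsto {x y : ℝ} (hxy : x < y) :
    Tendsto (fun n => ∫ t in x..y, zf n t) atTop atTop := by
  obtain ⟨k, hk1, hk2⟩ := qq_dense hxy
  set c := qq k with hc
  have hδ : 0 < y - c := sub_pos.2 hk2
  have hLB : Tendsto (fun n : ℕ =>
      Real.log (1 + ((n:ℝ)+1) * (y - c)) - Rk k * (y - c)) atTop atTop := by
    have h1 : Tendsto (fun n : ℕ => ((n:ℝ)+1)) atTop atTop :=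
      tendsto_atTop_add_const_right _ 1 tendsto_natCast_atTop_atTop
    have h2 : Tendsto (fun n : ℕ => ((n:ℝ)+1) * (y - c)) atTop atTop :=
      h1.atTop_mul_const hδ
    have h3 : Tendsto (fun n : ℕ => 1 + ((n:ℝ)+1) * (y - c)) atTop atTop :=
      tendsto_atTop_add_const_left _ 1 h2
    have h4 := Real.tendsto_log_atTop.comp h3
    exact tendsto_atTop_add_const_right _ (-(Rk k * (y - c))) h4 |>.congr
      (fun n => by simp only [Function.comp_apply]; ring)
  apply tendsto_atTop_mono' _ _ hLB
  filter_upwards [eventually_ge_atTop k] with n hn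
  exact key_integral hk1 hk2 rfl hn

lemma zf_bounded {x : ℝ} (hxQ : x ∉ Set.range qq) {M : ℕ}
    (hM : ∀ j, M ≤ j → rk j ≤ |x - qq j|) (n : ℕ) :
    zf n x ≤ 1 + ∑ j ∈ Finset.range M, |x - qq j|⁻¹ := by
  have hne : ∀ j, x ≠ qq j := fun j h => hxQ ⟨j, h.symm⟩
  have hstep : ∑ j ∈ Finset.range (n+1), g j n x
      ≤ ∑ j ∈ Finset.range M, |x - qq j|⁻¹ := by
    have hz : ∀ j ∈ Finset.range (n+1), g j n x ≠ 0 → j < M := by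
      intro j _ hj
      by_contra h
      exact hj (g_zero j n (hM j (by omega)))
    calc ∑ j ∈ Finset.range (n+1), g j n x
        = ∑ j ∈ (Finset.range (n+1)).filter (· < M), g j n x :=
          (Finset.sum_filter_of_ne hz).symm
      _ ≤ ∑ j ∈ Finset.range M, g j n x := by
          apply Finset.sum_le_sum_of_subset_of_nonneg
          · intro j hj
            simp only [Finset.mem_filter, Finset.mem_range] at hj ⊢
            exact hj.2
          · exact fun j _ _ => g_nonneg j n x
      _ ≤ ∑ j ∈ Finset.range M, |x - qq j|⁻¹ :=
          Finset.sum_le_sum fun j _ => g_le_inv j n (hne j)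
  unfold zf; linarith

noncomputable def LL : Set ℝ :=
  ⋂ M : ℕ, ⋃ k : ℕ, ⋃ (_ : M ≤ k), Metric.closedBall (qq k) (rk k)

lemma limSet_subset (I : Set ℝ) : limSet I zf ⊆ Set.range qq ∪ LL := by
  intro x hx
  by_contra h
  rw [Set.mem_union] at h
  push_neg at h
  obtain ⟨hxQ, hxL⟩ := h
  simp only [LL, Set.mem_iInter, Set.mem_iUnion, Metric.mem_closedBall, not_forall,
    not_exists, not_le] at hxL
  obtain ⟨M, hM⟩ := hxL
  have hM' : ∀ j, M ≤ j → rk j ≤ |x - qq j| := by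
    intro j hj
    have := hM j hj
    rw [Real.dist_eq] at this
    exact this.le
  obtain ⟨-, htend⟩ := hx
  have hb := zf_bounded hxQ hM'
  set B := 1 + ∑ j ∈ Finset.range M, |x - qq j|⁻¹
  obtain ⟨n, hn⟩ := (htend.eventually (eventually_ge_atTop (B + 1))).exists
  have := hb n
  linarith

lemma rk_antitone : Antitone rk := by
  intro a b hab
  unfold rk
  gcongr
  all_goals first
    | norm_num
    | exact Nat.pow_le_pow_left hab 2

lemma rk_tendsto : Tendsto rk atTop (𝓝 0) := by
  apply squeeze_zero (fun k => (rk_pos k).le) (fun k => rk_le k)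
  exact tendsto_pow_atTop_nhds_zero_of_lt_one (by norm_num) (by norm_num)

lemma ediam_cb (x r : ℝ) (hr : 0 ≤ r) :
    EMetric.diam (Metric.closedBall x r) ≤ ENNReal.ofReal (2 * r) := by
  apply EMetric.diam_le
  intro a ha b hb
  rw [Metric.mem_closedBall] at ha hb
  rw [edist_dist]
  apply ENNReal.ofReal_le_ofReal
  calc dist a b ≤ dist a x + dist x b := dist_triangle a x b
    _ ≤ r + r := add_le_add ha (by rwa [dist_comm])
    _ = 2 * r := by ring

lemma mu_LL (d : ℝ≥0) (hd : 0 < d) : μH[(d:ℝ)] LL = 0 := by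
  set w : ℝ≥0∞ := (ENNReal.ofReal (1/2)) ^ (d:ℝ) with hw
  set C : ℝ≥0∞ := (ENNReal.ofReal 2) ^ (d:ℝ) with hC
  set u : ℕ → ℝ≥0∞ := fun k => ENNReal.ofReal (2 * rk k) ^ (d:ℝ) with hu
  have hd0 : (0:ℝ) ≤ (d:ℝ) := d.coe_nonneg
  have hw1 : w < 1 := by
    apply ENNReal.rpow_lt_one (by simp [ENNReal.ofReal_lt_one])
    exact_mod_cast hd
  have hu_le : ∀ k, u k ≤ C * w ^ k := by
    intro k
    have h1 : ENNReal.ofReal (2 * rk k) = ENNReal.ofReal 2 * ENNReal.ofReal (rk k) :=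
      ENNReal.ofReal_mul (by norm_num)
    have h2 : ENNReal.ofReal (rk k) ≤ ENNReal.ofReal ((1/2:ℝ)) ^ k := by
      rw [← ENNReal.ofReal_pow (by norm_num)]
      exact ENNReal.ofReal_le_ofReal (rk_le k)
    calc u k = (ENNReal.ofReal 2 * ENNReal.ofReal (rk k)) ^ (d:ℝ) := by simp only [hu]; rw [h1]
      _ = C * ENNReal.ofReal (rk k) ^ (d:ℝ) := by
          rw [ENNReal.mul_rpow_of_nonneg _ _ hd0]
      _ ≤ C * (ENNReal.ofReal (1/2) ^ k) ^ (d:ℝ) := by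
          gcongr
      _ = C * w ^ k := by
          rw [← ENNReal.rpow_natCast (ENNReal.ofReal (1/2)) k, ← ENNReal.rpow_mul,
            mul_comm (k:ℝ), ENNReal.rpow_mul, ENNReal.rpow_natCast]
  have htsum : ∑' k, u k ≠ ⊤ := by
    have h1 : ∑' k, u k ≤ C * (1 - w)⁻¹ := by
      calc ∑' k, u k ≤ ∑' k, C * w ^ k := ENNReal.tsum_le_tsum hu_le
        _ = C * ∑' k, w ^ k := ENNReal.tsum_mul_left
        _ = C * (1 - w)⁻¹ := by rw [ENNReal.tsum_geometric]
    apply ne_top_of_le_ne_top _ h1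
    apply ENNReal.mul_ne_top
    · exact ENNReal.rpow_ne_top_of_nonneg hd0 ENNReal.ofReal_ne_top
    · rw [Ne, ENNReal.inv_eq_top, tsub_eq_zero_iff_le]
      exact fun h => absurd hw1 (not_lt.2 h)
  have hbound : μH[(d:ℝ)] LL ≤ liminf
      (fun M : ℕ => ∑' i : ℕ, EMetric.diam (Metric.closedBall (qq (i + M)) (rk (i + M))) ^ (d:ℝ))
      atTop := by
    apply MeasureTheory.Measure.hausdorffMeasure_le_liminf_tsum (d:ℝ) LL
      (fun M => ENNReal.ofReal (2 * rk M))
      (by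
        have : Tendsto (fun M : ℕ => 2 * rk M) atTop (𝓝 0) := by
          simpa using (rk_tendsto.const_mul 2)
        simpa using (ENNReal.tendsto_ofReal this))
      (fun M i => Metric.closedBall (qq (i + M)) (rk (i + M)))
    · filter_upwards with M i
      calc EMetric.diam (Metric.closedBall (qq (i + M)) (rk (i + M)))
          ≤ ENNReal.ofReal (2 * rk (i + M)) := ediam_cb _ _ (rk_pos _).le
        _ ≤ ENNReal.ofReal (2 * rk M) := by
            apply ENNReal.ofReal_le_ofReal
            have := rk_antitone (Nat.le_add_left M i)
            linarith
    · filter_upwards with M x hx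
      have := Set.mem_iInter.1 hx M
      simp only [Set.mem_iUnion] at this
      obtain ⟨k, hk, hkx⟩ := this
      refine Set.mem_iUnion.2 ⟨k - M, ?_⟩
      rwa [Nat.sub_add_cancel hk]
  have hliminf : liminf
      (fun M : ℕ => ∑' i : ℕ, EMetric.diam (Metric.closedBall (qq (i + M)) (rk (i + M))) ^ (d:ℝ))
      atTop ≤ liminf (fun M : ℕ => ∑' i : ℕ, u (i + M)) atTop := by
    have hle : ∀ M : ℕ,
        (∑' i : ℕ, EMetric.diam (Metric.closedBall (qq (i + M)) (rk (i + M))) ^ (d:ℝ))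
          ≤ ∑' i : ℕ, u (i + M) := by
      intro M
      apply ENNReal.tsum_le_tsum
      intro i
      exact ENNReal.rpow_le_rpow (ediam_cb _ _ (rk_pos _).le) hd0
    exact liminf_le_liminf (Eventually.of_forall hle)
  have hzero : liminf (fun M : ℕ => ∑' i : ℕ, u (i + M)) atTop = 0 :=
    (ENNReal.tendsto_sum_nat_add u htsum).liminf_eq
  have := hbound.trans (hliminf.trans_eq hzero)
  exact le_antisymm this zero_le

lemma dimH_LL : dimH LL = 0 := by
  refine le_antisymm ?_ zero_le
  by_contra h
  rw [not_le] at h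
  obtain ⟨r, hr0, hr⟩ := ENNReal.lt_iff_exists_nnreal_btwn.1 h
  have hrpos : 0 < r := by exact_mod_cast hr0
  have : dimH LL ≤ r := by
    apply dimH_le_of_hausdorffMeasure_ne_top
    rw [mu_LL r hrpos]
    exact ENNReal.zero_ne_top
  exact absurd hr (not_lt.2 this)

/-- For every nondegenerate interval `I` there is a positive-valued max-family `(z_n)`
with `dim_H I_z = 0`. -/
theorem stmt_8 (I : Set ℝ) (hI : I.OrdConnected) (hInt : I.Nontrivial) :
    ∃ z : ℕ → ℝ → ℝ, (∀ n, ∀ x ∈ I, 0 < z n x) ∧ IsMaxFamily I z ∧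
      dimH (limSet I z) = 0 := by
  refine ⟨zf, fun n x _ => zf_pos n x,
    ⟨fun n => (zf_cont n).continuousOn, fun n x _ => zf_mono n x,
      fun x _ y _ hxy => integral_tendsto hxy⟩, ?_⟩
  have h1 : dimH (limSet I zf) ≤ dimH (Set.range qq ∪ LL) := dimH_mono (limSet_subset I)
  rw [dimH_union, dimH_countable (Set.countable_range qq), dimH_LL] at h1
  simpa using le_antisymm (by simpa using h1) zero_le
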